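/- Suppose τ ∈ Aut_ℂ(K) satisfies τ(x) = x⁻¹ and τ(y) = y/x². Then τ ∘ τ = id, and τ is conjugate in Aut_ℂ(K) to a projective involution: there exist σ ∈ Aut_ℂ(K), an invertible 3×3 complex matrix (a_{ij})_{0≤i,j≤2}, and g ∈ Aut_ℂ(K) with g ∘ g = id, g(x) = (a₁₀ + a₁₁x + a₁₂y)/(a₀₀ + a₀₁x + a₀₂y) and g(y) = (a₂₀ + a₂₁x + a₂₂y)/(a₀₀ + a₀₁x + a₀₂y), such that σ ∘ τ ∘ σ⁻¹ = g. -/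

import Mathlib

set_option maxHeartbeats 1000000
set_option synthInstance.maxHeartbeats 400000
set_option maxRecDepth 8000

/-- The field `K = ℂ(x, y)` of rational functions in two variables over `ℂ`, realized as the
fraction field of the polynomial ring `ℂ[x, y]`. Its group of `ℂ`-algebra automorphisms
`K ≃ₐ[ℂ] K` is the plane Cremona group `Cr(2)`. -/
noncomputable abbrev PlaneFunctionField : Type :=
  FractionRing (MvPolynomial (Fin 2) ℂ)

/-- The element `x` of `K = ℂ(x, y)`. -/
noncomputable def Xf : PlaneFunctionField :=
  algebraMap (MvPolynomial (Fin 2) ℂ) PlaneFunctionField (MvPolynomial.X 0)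

/-- The element `y` of `K = ℂ(x, y)`. -/
noncomputable def Yf : PlaneFunctionField :=
  algebraMap (MvPolynomial (Fin 2) ℂ) PlaneFunctionField (MvPolynomial.X 1)

/-- The image of a complex constant in `K = ℂ(x, y)`. -/
noncomputable def Cf (c : ℂ) : PlaneFunctionField :=
  algebraMap ℂ PlaneFunctionField c

namespace Tau2Aux

open MvPolynomial

local notation "Rxy" => MvPolynomial (Fin 2) ℂ
local notation "K" => PlaneFunctionField

lemma Xf_def : Xf = algebraMap Rxy K (X 0) := rfl
lemma Yf_def : Yf = algebraMap Rxy K (X 1) := rfl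

lemma Cf_zero : Cf 0 = 0 := map_zero _
lemma Cf_one : Cf 1 = 1 := map_one _

lemma Xf_ne_zero : Xf ≠ 0 := by
  intro h
  have := (map_eq_zero_iff (algebraMap Rxy K) (IsFractionRing.injective Rxy K)).mp h
  exact MvPolynomial.X_ne_zero 0 this

lemma Xf_add_one_ne_zero : Xf + 1 ≠ 0 := by
  intro h
  have h1 : algebraMap Rxy K (X 0 + 1) = 0 := by
    rw [map_add, map_one]; exact h
  have h2 := (map_eq_zero_iff (algebraMap Rxy K) (IsFractionRing.injective Rxy K)).mp h1
  have := congrArg (MvPolynomial.eval (fun _ => (0 : ℂ))) h2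
  simp at this

lemma algHom_ext {f g : K →ₐ[ℂ] K} (hx : f Xf = g Xf) (hy : f Yf = g Yf) : f = g := by
  have h : (f : K →+* K).comp (algebraMap Rxy K) = (g : K →+* K).comp (algebraMap Rxy K) := by
    apply MvPolynomial.ringHom_ext
    · intro c
      simp only [RingHom.comp_apply]
      have e : algebraMap Rxy K (C c) = algebraMap ℂ K c := by
        rw [← MvPolynomial.algebraMap_eq, ← IsScalarTower.algebraMap_apply ℂ Rxy K]
      rw [e]
      exact (f.commutes c).trans (g.commutes c).symm
    · intro i
      fin_cases i
      · exact hx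
      · exact hy
  exact AlgHom.ext fun z => RingHom.congr_fun (IsLocalization.ringHom_ext (nonZeroDivisors Rxy) h) z

lemma algEquiv_ext {f g : K ≃ₐ[ℂ] K} (hx : f Xf = g Xf) (hy : f Yf = g Yf) : f = g := by
  have := algHom_ext (f := f.toAlgHom) (g := g.toAlgHom) hx hy
  exact AlgEquiv.ext fun z => AlgHom.congr_fun this z

lemma indepXY : AlgebraicIndependent ℂ ![Xf, Yf] := by
  have h0 := MvPolynomial.algebraicIndependent_X (Fin 2) ℂ
  have h1 := h0.map' (f := IsScalarTower.toAlgHom ℂ Rxy K) (IsFractionRing.injective Rxy K)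
  convert h1 using 1
  funext i; fin_cases i <;> rfl

lemma indepX1 : AlgebraicIndependent ℂ ![Xf] := by
  have := indepXY.comp ![0] (by decide)
  convert this using 1
  funext i; fin_cases i <;> rfl

lemma indep_option : AlgebraicIndependent ℂ (fun o : Option (Fin 1) => o.elim Yf ![Xf]) := by
  have := indepXY.comp (fun o : Option (Fin 1) => o.elim 1 ![0]) (by decide)
  convert this using 1
  funext o
  cases o with
  | none => rfl
  | some i => fin_cases i; rfl

lemma trans_Yf : Transcendental (Algebra.adjoin ℂ (Set.range ![Xf])) Yf :=
  (indepX1.option_iff_transcendental Yf).mp indep_option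

lemma trans_u : Transcendental (Algebra.adjoin ℂ (Set.range ![Xf])) ((Xf + 1) * Yf) := by
  intro h
  apply trans_Yf
  obtain ⟨p, hp0, hp⟩ := h
  have hcmem : Xf + 1 ∈ Algebra.adjoin ℂ (Set.range ![Xf]) :=
    add_mem (Algebra.subset_adjoin ⟨0, rfl⟩) (one_mem _)
  have hcne : (⟨Xf + 1, hcmem⟩ : Algebra.adjoin ℂ (Set.range ![Xf])) ≠ 0 := by
    intro h0
    exact Xf_add_one_ne_zero (by simpa using congrArg Subtype.val h0)
  refine ⟨p.comp (Polynomial.C (⟨Xf + 1, hcmem⟩ :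
      Algebra.adjoin ℂ (Set.range ![Xf])) * Polynomial.X), ?_, ?_⟩
  · intro h0
    rcases Polynomial.comp_eq_zero_iff.mp h0 with h1 | ⟨_, h2⟩
    · exact hp0 h1
    · have hcoeff : ((Polynomial.C (⟨Xf + 1, hcmem⟩ :
          Algebra.adjoin ℂ (Set.range ![Xf]))) * Polynomial.X).coeff 0 = 0 := by simp
      rw [hcoeff, map_zero] at h2
      rcases mul_eq_zero.mp h2 with h3 | h3
      · exact hcne (Polynomial.C_eq_zero.mp h3)
      · exact Polynomial.X_ne_zero h3
  · rw [Polynomial.aeval_comp]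
    have he : Polynomial.aeval Yf ((Polynomial.C (⟨Xf + 1, hcmem⟩ :
        Algebra.adjoin ℂ (Set.range ![Xf]))) * Polynomial.X) = (Xf + 1) * Yf := by
      rw [map_mul, Polynomial.aeval_C, Polynomial.aeval_X, Subalgebra.algebraMap_eq]
      rfl
    rw [he, hp]

lemma indep_xu : AlgebraicIndependent ℂ ![Xf, (Xf + 1) * Yf] := by
  have h := (indepX1.option_iff_transcendental ((Xf + 1) * Yf)).mpr trans_u
  have := h.comp ![some 0, none] (by decide)
  convert this using 1
  funext i; fin_cases i <;> rfl

noncomputable def φ : Rxy →ₐ[ℂ] K := MvPolynomial.aeval ![Xf, (Xf + 1) * Yf]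

lemma φinj : Function.Injective φ := indep_xu

noncomputable def s : K →ₐ[ℂ] K := IsFractionRing.liftAlgHom (g := φ) φinj

lemma s_algebraMap (p : Rxy) : s (algebraMap Rxy K p) = φ p := by
  have : s (algebraMap Rxy K p) = IsFractionRing.lift φinj (algebraMap Rxy K p) := rfl
  rw [this, IsFractionRing.lift_algebraMap]
  rfl

lemma s_Xf : s Xf = Xf := by
  rw [Xf_def, s_algebraMap]
  show MvPolynomial.aeval ![Xf, (Xf + 1) * Yf] (X 0) = _
  rw [MvPolynomial.aeval_X]
  rfl

lemma s_Yf : s Yf = (Xf + 1) * Yf := by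
  rw [Yf_def, s_algebraMap]
  show MvPolynomial.aeval ![Xf, (Xf + 1) * Yf] (X 1) = _
  rw [MvPolynomial.aeval_X]
  rfl

lemma algebraMap_eq_aeval (p : Rxy) :
    algebraMap Rxy K p = MvPolynomial.aeval ![Xf, Yf] p := by
  have hfam : (fun i => (IsScalarTower.toAlgHom ℂ Rxy K) (MvPolynomial.X i)) = ![Xf, Yf] := by
    funext i; fin_cases i <;> rfl
  rw [← hfam, ← MvPolynomial.comp_aeval_apply, MvPolynomial.aeval_X_left_apply]
  rfl

lemma s_aeval (p : Rxy) :
    s (MvPolynomial.aeval ![Xf, Yf / (Xf + 1)] p) = algebraMap Rxy K p := by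
  rw [MvPolynomial.comp_aeval_apply, algebraMap_eq_aeval]
  have hfam : (fun i => s (![Xf, Yf / (Xf + 1)] i)) = ![Xf, Yf] := by
    funext i
    fin_cases i
    · exact s_Xf
    · show s (Yf / (Xf + 1)) = Yf
      rw [map_div₀, s_Yf, map_add, s_Xf, map_one]
      exact mul_div_cancel_left₀ Yf Xf_add_one_ne_zero
  rw [hfam]

lemma s_surj : Function.Surjective s := by
  intro z
  obtain ⟨a, b, hb, rfl⟩ := IsFractionRing.div_surjective (A := MvPolynomial (Fin 2) ℂ) z
  refine ⟨MvPolynomial.aeval ![Xf, Yf / (Xf + 1)] a /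
    MvPolynomial.aeval ![Xf, Yf / (Xf + 1)] b, ?_⟩
  rw [map_div₀, s_aeval, s_aeval]

lemma s_inj : Function.Injective s :=
  (s : K →+* K).injective

noncomputable def σ : K ≃ₐ[ℂ] K :=
  AlgEquiv.ofBijective s ⟨s_inj, s_surj⟩

lemma σ_apply (z : K) : σ z = s z := rfl

lemma σ_Xf : σ Xf = Xf := s_Xf

lemma σ_Yf : σ Yf = (Xf + 1) * Yf := s_Yf

lemma σ_symm_Xf : σ.symm Xf = Xf := by
  rw [AlgEquiv.symm_apply_eq, σ_Xf]

lemma σ_symm_Yf : σ.symm Yf = Yf / (Xf + 1) := by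
  rw [AlgEquiv.symm_apply_eq, σ_apply, map_div₀, s_Yf, map_add, s_Xf, map_one]
  exact (mul_div_cancel_left₀ Yf Xf_add_one_ne_zero).symm

/-- The matrix of the projective involution `(x, y) ↦ (1/x, y/x)`. -/
def M : Matrix (Fin 3) (Fin 3) ℂ := !![0,1,0;1,0,0;0,0,1]

lemma M00 : M 0 0 = 0 := rfl
lemma M01 : M 0 1 = 1 := rfl
lemma M02 : M 0 2 = 0 := rfl
lemma M10 : M 1 0 = 1 := rfl
lemma M11 : M 1 1 = 0 := rfl
lemma M12 : M 1 2 = 0 := rfl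
lemma M20 : M 2 0 = 0 := rfl
lemma M21 : M 2 1 = 0 := rfl
lemma M22 : M 2 2 = 1 := rfl

lemma M_isUnit : IsUnit M := by
  rw [Matrix.isUnit_iff_isUnit_det]
  have : M.det = -1 := by
    rw [Matrix.det_fin_three, M00, M01, M02, M10, M11, M12, M20, M21, M22]
    ring
  rw [this]
  exact isUnit_one.neg

end Tau2Aux

/-- The quadratic transformation `τ₂ : (x, y) ↦ (x⁻¹, y/x²)` is an involution and is
conjugate in the Cremona group to a projective (linear fractional) involution
`g : (x, y) ↦ ((a₁₀ + a₁₁x + a₁₂y)/(a₀₀ + a₀₁x + a₀₂y), (a₂₀ + a₂₁x + a₂₂y)/(a₀₀ + a₀₁x + a₀₂y))`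
given by an invertible 3×3 complex matrix. -/
theorem tau2_conjugate_projective_involution
    (τ : PlaneFunctionField ≃ₐ[ℂ] PlaneFunctionField)
    (hτx : τ Xf = Xf⁻¹) (hτy : τ Yf = Yf / Xf ^ 2) :
    τ * τ = 1 ∧
    ∃ (σ g : PlaneFunctionField ≃ₐ[ℂ] PlaneFunctionField)
      (a : Matrix (Fin 3) (Fin 3) ℂ), IsUnit a ∧ g * g = 1 ∧
        g Xf = (Cf (a 1 0) + Cf (a 1 1) * Xf + Cf (a 1 2) * Yf) /
          (Cf (a 0 0) + Cf (a 0 1) * Xf + Cf (a 0 2) * Yf) ∧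
        g Yf = (Cf (a 2 0) + Cf (a 2 1) * Xf + Cf (a 2 2) * Yf) /
          (Cf (a 0 0) + Cf (a 0 1) * Xf + Cf (a 0 2) * Yf) ∧
        σ * τ * σ⁻¹ = g := by
  have hX0 := Tau2Aux.Xf_ne_zero
  have hX1 := Tau2Aux.Xf_add_one_ne_zero
  have hτ2 : τ * τ = 1 := by
    apply Tau2Aux.algEquiv_ext
    · show τ (τ Xf) = Xf
      rw [hτx, map_inv₀, hτx, inv_inv]
    · show τ (τ Yf) = Yf
      rw [hτy, map_div₀, hτy, map_pow, hτx]
      field_simp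
  have hinv : (Tau2Aux.σ)⁻¹ = (Tau2Aux.σ).symm := rfl
  refine ⟨hτ2, Tau2Aux.σ, Tau2Aux.σ * τ * (Tau2Aux.σ)⁻¹, Tau2Aux.M,
    Tau2Aux.M_isUnit, ?_, ?_, ?_, rfl⟩
  · have h : Tau2Aux.σ * τ * (Tau2Aux.σ)⁻¹ * (Tau2Aux.σ * τ * (Tau2Aux.σ)⁻¹)
        = Tau2Aux.σ * (τ * τ) * (Tau2Aux.σ)⁻¹ := by group
    rw [h, hτ2, mul_one, mul_inv_cancel]
  · show Tau2Aux.σ (τ ((Tau2Aux.σ)⁻¹ Xf)) = _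
    rw [hinv, Tau2Aux.σ_symm_Xf, hτx, map_inv₀, Tau2Aux.σ_Xf,
      Tau2Aux.M10, Tau2Aux.M11, Tau2Aux.M12, Tau2Aux.M00, Tau2Aux.M01, Tau2Aux.M02,
      Tau2Aux.Cf_zero, Tau2Aux.Cf_one]
    simp
  · show Tau2Aux.σ (τ ((Tau2Aux.σ)⁻¹ Yf)) = _
    rw [hinv, Tau2Aux.σ_symm_Yf, map_div₀, hτy, map_add, hτx, map_one, map_div₀, map_div₀,
      map_add, map_pow, map_inv₀, map_one, Tau2Aux.σ_Xf, Tau2Aux.σ_Yf,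
      Tau2Aux.M20, Tau2Aux.M21, Tau2Aux.M22, Tau2Aux.M00, Tau2Aux.M01, Tau2Aux.M02,
      Tau2Aux.Cf_zero, Tau2Aux.Cf_one]
    simp only [zero_mul, one_mul, zero_add, add_zero, mul_zero]
    have hXi : Xf⁻¹ + 1 ≠ 0 := by
      have he : Xf⁻¹ + 1 = (1 + Xf) / Xf := by field_simp
      rw [he]
      intro h1
      rcases div_eq_zero_iff.mp h1 with h2 | h2
      · exact hX1 (by rw [add_comm] at h2; exact h2)
      · exact hX0 h2
    rw [div_eq_div_iff hXi hX0]
    field_simp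
    ring
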